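/- arXiv:1506.07945 — 3 statements merged into one kernel-verified Lean document; each statement's English description precedes it below -/
import Mathlib

section
/- Let N be a positive integer and n = 2^N - 1. Then for all q in ℚ with q^i ≠ -1 for 0 ≤ i ≤ N-1, ∑_{m=0}^{n} s(m)·q^{z_n(m)} = 2·(1+q)⋯(1+q^{N-1})·∑_{j=0}^{N-1} 1/(1+q^j). -/
/-- Binary sum-of-digits function. -/
def sdig (m : ℕ) : ℕ := (Nat.digits 2 m).sum

/-- The `i`-th digit of `m` in base `b`. -/
def dig (b m i : ℕ) : ℕ := m / b ^ i % b

/-- `z_n(m) = ∑_{k=0}^{N-1} k·(1 - δ(n_k, m_k))`, the weighted count of positions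
among the `N` lowest binary digits at which `m` and `n` differ. -/
def zfun (N n m : ℕ) : ℕ :=
  ∑ k ∈ Finset.range N, k * (1 - if dig 2 n k = dig 2 m k then 1 else 0)

open Finset

lemma dig_le_one (m k : ℕ) : dig 2 m k ≤ 1 := by
  have : m / 2 ^ k % 2 < 2 := Nat.mod_lt _ (by norm_num)
  unfold dig; omega

lemma dig_of_lt {N m : ℕ} (hm : m < 2 ^ N) {k : ℕ} (hk : N ≤ k) : dig 2 m k = 0 := by
  have : m < 2 ^ k := lt_of_lt_of_le hm (Nat.pow_le_pow_right (by norm_num) hk)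
  unfold dig
  rw [Nat.div_eq_of_lt this]

lemma dig_add_pow {N m : ℕ} (hm : m < 2 ^ N) {k : ℕ} (hk : k < N) :
    dig 2 (2 ^ N + m) k = dig 2 m k := by
  unfold dig
  have h1 : 2 ^ N = 2 ^ k * (2 * 2 ^ (N - k - 1)) := by
    rw [← pow_succ', ← pow_add]; congr 1; omega
  rw [h1, Nat.mul_add_div (Nat.pow_pos (by norm_num)), Nat.add_comm,
    Nat.add_mul_mod_self_left]

lemma dig_add_pow_self {N m : ℕ} (hm : m < 2 ^ N) : dig 2 (2 ^ N + m) N = 1 := by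
  unfold dig
  rw [Nat.add_div_left _ (Nat.pow_pos (by norm_num)), Nat.div_eq_of_lt hm]

lemma dig_two_pow_sub_one {N k : ℕ} (hk : k < N) : dig 2 (2 ^ N - 1) k = 1 := by
  unfold dig
  have h3 : 0 < 2 ^ k := Nat.pow_pos (by norm_num)
  have h4 : 2 ≤ 2 ^ (N - k) := by
    calc 2 = 2 ^ 1 := by norm_num
    _ ≤ 2 ^ (N - k) := Nat.pow_le_pow_right (by norm_num) (by omega)
  have h2 : 2 ^ N = 2 ^ k * 2 ^ (N - k) := by rw [← pow_add]; congr 1; omega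
  have h5 : 2 ^ k * (2 ^ (N - k) - 1) = 2 ^ N - 2 ^ k := by
    rw [h2, Nat.mul_sub, Nat.mul_one]
  have h1 : 2 ^ N - 1 = 2 ^ k * (2 ^ (N - k) - 1) + (2 ^ k - 1) := by
    have h8 : 1 ≤ 2 ^ N := Nat.one_le_two_pow
    have h9 : 2 ^ k ≤ 2 ^ N := Nat.pow_le_pow_right (by norm_num) (by omega)
    rw [h5]; omega
  rw [h1, Nat.mul_add_div h3, Nat.div_eq_of_lt (by omega), Nat.add_zero]
  have h6 : 2 ^ (N - k) = 2 * 2 ^ (N - k - 1) := by rw [← pow_succ']; congr 1; omega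
  have h7 : 0 < 2 ^ (N - k - 1) := Nat.pow_pos (by norm_num)
  omega

lemma sdig_of_lt : ∀ N, ∀ m < 2 ^ N, sdig m = ∑ k ∈ Finset.range N, dig 2 m k := by
  intro N
  induction N with
  | zero => intro m hm; interval_cases m; simp [sdig]
  | succ N ih =>
    intro m hm
    rcases Nat.eq_zero_or_pos m with rfl | hpos
    · simp [sdig, dig]
    · have : sdig m = m % 2 + sdig (m / 2) := by
        unfold sdig
        rw [Nat.digits_def' (by norm_num : 1 < 2) hpos]
        simp [Nat.add_comm]
      rw [this, Finset.sum_range_succ', ih (m / 2) (by omega)]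
      have hd0 : dig 2 m 0 = m % 2 := by simp [dig]
      have hds : ∀ k, dig 2 m (k + 1) = dig 2 (m / 2) k := by
        intro k; unfold dig
        rw [pow_succ', Nat.div_div_eq_div_mul]
      simp [hd0, hds, Nat.add_comm]

lemma sum_range_two_mul {M : Type*} [AddCommMonoid M] (a : ℕ) (f : ℕ → M) :
    ∑ m ∈ range (2 * a), f m = ∑ m ∈ range a, f m + ∑ m ∈ range a, f (a + m) := by
  rw [two_mul, Finset.sum_range_add]

/-- `z`-value when all reference digits are `1`. -/
def zz (N m : ℕ) : ℕ := ∑ k ∈ range N, k * (1 - dig 2 m k)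

lemma zz_lower {N m : ℕ} (hm : m < 2 ^ N) : zz (N + 1) m = zz N m + N := by
  unfold zz
  rw [Finset.sum_range_succ, dig_of_lt hm (le_refl N)]
  simp

lemma zz_upper {N m : ℕ} (hm : m < 2 ^ N) : zz (N + 1) (2 ^ N + m) = zz N m := by
  unfold zz
  rw [Finset.sum_range_succ, dig_add_pow_self hm]
  rw [Finset.sum_congr rfl fun k hk => by rw [dig_add_pow hm (Finset.mem_range.mp hk)]]
  simp

lemma P_eq (q : ℚ) (N : ℕ) :
    ∑ m ∈ range (2 ^ N), q ^ zz N m = ∏ k ∈ range N, (1 + q ^ k) := by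
  induction N with
  | zero => simp [zz]
  | succ N ih =>
    rw [pow_succ, mul_comm (2 ^ N) 2, sum_range_two_mul, prod_range_succ]
    have h1 : ∀ m ∈ range (2 ^ N), q ^ zz (N + 1) m = q ^ N * q ^ zz N m := fun m hm => by
      rw [zz_lower (mem_range.mp hm), pow_add, mul_comm]
    have h2 : ∀ m ∈ range (2 ^ N), q ^ zz (N + 1) (2 ^ N + m) = q ^ zz N m := fun m hm => by
      rw [zz_upper (mem_range.mp hm)]
    rw [sum_congr rfl h1, sum_congr rfl h2, ← mul_sum, ih]
    ring

/-- Digit sum over the lowest `N` binary digits. -/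
def ds (N m : ℕ) : ℕ := ∑ k ∈ range N, dig 2 m k

lemma ds_lower {N m : ℕ} (hm : m < 2 ^ N) : ds (N + 1) m = ds N m := by
  unfold ds
  rw [Finset.sum_range_succ, dig_of_lt hm (le_refl N), Nat.add_zero]

lemma ds_upper {N m : ℕ} (hm : m < 2 ^ N) : ds (N + 1) (2 ^ N + m) = ds N m + 1 := by
  unfold ds
  rw [Finset.sum_range_succ, dig_add_pow_self hm]
  rw [Finset.sum_congr rfl fun k hk => by rw [dig_add_pow hm (Finset.mem_range.mp hk)]]

lemma S_eq (q : ℚ) (N : ℕ) (hq : ∀ i, i < N → q ^ i ≠ -1) :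
    ∑ m ∈ range (2 ^ N), (ds N m : ℚ) * q ^ zz N m =
      (∏ k ∈ range N, (1 + q ^ k)) * ∑ j ∈ range N, 1 / (1 + q ^ j) := by
  induction N with
  | zero => simp [ds]
  | succ N ih =>
    have hqN : 1 + q ^ N ≠ 0 := fun h => hq N (Nat.lt_succ_self N) (by linarith)
    rw [pow_succ, mul_comm (2 ^ N) 2, sum_range_two_mul, prod_range_succ, sum_range_succ]
    have h1 : ∀ m ∈ range (2 ^ N), (ds (N + 1) m : ℚ) * q ^ zz (N + 1) m
        = q ^ N * ((ds N m : ℚ) * q ^ zz N m) := fun m hm => by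
      rw [zz_lower (mem_range.mp hm), ds_lower (mem_range.mp hm), pow_add]; ring
    have h2 : ∀ m ∈ range (2 ^ N), (ds (N + 1) (2 ^ N + m) : ℚ) * q ^ zz (N + 1) (2 ^ N + m)
        = (ds N m : ℚ) * q ^ zz N m + q ^ zz N m := fun m hm => by
      rw [zz_upper (mem_range.mp hm), ds_upper (mem_range.mp hm)]
      push_cast; ring
    rw [sum_congr rfl h1, sum_congr rfl h2, ← mul_sum, sum_add_distrib,
      ih (fun i hi => hq i (by omega)), P_eq]
    field_simp
    ring

/-- `∑_{m=0}^{2^N-1} s(m) q^{z_n(m)} = 2(1+q)⋯(1+q^{N-1})·∑_{j=0}^{N-1} 1/(1+q^j)`. -/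
theorem sum_sdig_q_pow_zfun (N : ℕ) (hN : 0 < N) (n : ℕ) (hn : n = 2 ^ N - 1)
    (q : ℚ) (hq : ∀ i, i ≤ N - 1 → q ^ i ≠ -1) :
    (∑ m ∈ Finset.range (n + 1), (sdig m : ℚ) * q ^ zfun N n m) =
      2 * (∏ i ∈ Finset.Ico 1 N, (1 + q ^ i)) *
        ∑ j ∈ Finset.range N, 1 / (1 + q ^ j) := by
  have h2N : 1 ≤ 2 ^ N := Nat.one_le_two_pow
  have hn1 : n + 1 = 2 ^ N := by omega
  have hq' : ∀ i, i < N → q ^ i ≠ -1 := fun i hi => hq i (by omega)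
  have hzf : ∀ m ∈ range (2 ^ N), (sdig m : ℚ) * q ^ zfun N n m
      = (ds N m : ℚ) * q ^ zz N m := by
    intro m hm
    have hm' := mem_range.mp hm
    have hz : zfun N n m = zz N m := by
      unfold zfun zz
      refine Finset.sum_congr rfl fun k hk => ?_
      have hk' := mem_range.mp hk
      rw [hn, dig_two_pow_sub_one hk']
      have hd := dig_le_one m k
      interval_cases h : dig 2 m k <;> simp
    rw [hz, sdig_of_lt N m hm']
    rfl
  rw [hn1, Finset.sum_congr rfl hzf, S_eq q N hq']
  have hprod : ∏ k ∈ range N, (1 + q ^ k) = 2 * ∏ i ∈ Finset.Ico 1 N, (1 + q ^ i) := by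
    rw [range_eq_Ico, Finset.prod_eq_prod_Ico_succ_bot hN]
    norm_num
  rw [hprod]
end

section
/- Let b ≥ 2 be an integer and n a non-negative integer with base-b expansion n = n_{N-1}·b^{N-1} + ⋯ + n_0·b^0. Then for all x, y, p, q, r in ℚ (or any commutative ℚ-algebra), ∏_{i=0}^{N-1} B(p^i·x + q^i·y; r; n_i) = ∑_{0 ≤ m ⪯_b n} ( ∏_{i=0}^{N-1} B(p^i·x; r; m_i) · ∏_{i=0}^{N-1} B(q^i·y; r; n_i - m_i) ), where m has base-b digits m_i. -/
open scoped Classical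

/-- The generalized binomial coefficient `B(x; r; d) = x(x+r)(x+2r)⋯(x+(d-1)r)/d!`. -/
def genBinom (x r : ℚ) (d : ℕ) : ℚ :=
  (∏ i ∈ Finset.range d, (x + i * r)) / (Nat.factorial d)

lemma genBinom_zero (x r : ℚ) : genBinom x r 0 = 1 := by simp [genBinom]

lemma genBinom_succ (x r : ℚ) (d : ℕ) :
    ((d : ℚ) + 1) * genBinom x r (d + 1) = genBinom x r d * (x + d * r) := by
  have hfac : ((Nat.factorial d : ℚ)) ≠ 0 := by
    exact_mod_cast Nat.factorial_ne_zero d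
  simp only [genBinom, Finset.prod_range_succ, Nat.factorial_succ, Nat.cast_mul,
    Nat.cast_add, Nat.cast_one]
  field_simp
  simp only [mul_comm r]
  ring

lemma genBinom_vandermonde (x y r : ℚ) (d : ℕ) :
    genBinom (x + y) r d
      = ∑ k ∈ Finset.range (d + 1), genBinom x r k * genBinom y r (d - k) := by
  induction d with
  | zero => simp [genBinom_zero]
  | succ d ih =>
    have hd1 : ((d : ℚ) + 1) ≠ 0 := by positivity
    apply mul_left_cancel₀ hd1
    rw [genBinom_succ, ih]
    have split : ∀ k ∈ Finset.range (d + 2),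
        ((d : ℚ) + 1) * (genBinom x r k * genBinom y r (d + 1 - k))
          = (k : ℚ) * genBinom x r k * genBinom y r (d + 1 - k)
            + genBinom x r k * (((d + 1 - k : ℕ) : ℚ) * genBinom y r (d + 1 - k)) := by
      intro k hk
      have hk' : k ≤ d + 1 := by
        simpa [Nat.lt_succ_iff] using hk
      have : ((d + 1 - k : ℕ) : ℚ) = (d : ℚ) + 1 - k := by
        push_cast [Nat.cast_sub hk']
        ring
      rw [this]; ring
    rw [Finset.mul_sum, Finset.sum_congr rfl split, Finset.sum_add_distrib]
    have hS1 : ∑ k ∈ Finset.range (d + 2),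
        (k : ℚ) * genBinom x r k * genBinom y r (d + 1 - k)
          = ∑ k ∈ Finset.range (d + 1),
              genBinom x r k * (x + k * r) * genBinom y r (d - k) := by
      rw [Finset.sum_range_succ']
      simp only [Nat.cast_zero, zero_mul, add_zero]
      apply Finset.sum_congr rfl
      intro k hk
      have h1 : ((k : ℚ) + 1) * genBinom x r (k + 1) = genBinom x r k * (x + k * r) :=
        genBinom_succ x r k
      have h2 : d + 1 - (k + 1) = d - k := by omega
      rw [h2]
      push_cast
      rw [h1]
    have hS2 : ∑ k ∈ Finset.range (d + 2),
        genBinom x r k * (((d + 1 - k : ℕ) : ℚ) * genBinom y r (d + 1 - k))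
          = ∑ k ∈ Finset.range (d + 1),
              genBinom x r k * (genBinom y r (d - k) * (y + (d - k : ℕ) * r)) := by
      rw [Finset.sum_range_succ]
      simp only [Nat.sub_self, Nat.cast_zero, zero_mul, mul_zero, add_zero]
      apply Finset.sum_congr rfl
      intro k hk
      have hk' : k ≤ d := by simpa [Nat.lt_succ_iff] using hk
      have h2 : d + 1 - k = (d - k) + 1 := by omega
      rw [h2]
      have h1 : (((d - k : ℕ) : ℚ) + 1) * genBinom y r ((d - k) + 1)
          = genBinom y r (d - k) * (y + (d - k : ℕ) * r) := genBinom_succ y r (d - k)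
      rw [show (((d - k) + 1 : ℕ) : ℚ) = ((d - k : ℕ) : ℚ) + 1 by push_cast; ring, h1]
    rw [hS1, hS2, ← Finset.sum_add_distrib, Finset.sum_mul]
    apply Finset.sum_congr rfl
    intro k hk
    have hk' : k ≤ d := by simpa [Nat.lt_succ_iff] using hk
    have hcast : ((d - k : ℕ) : ℚ) = (d : ℚ) - k := Nat.cast_sub hk'
    rw [hcast]
    ring

lemma dig_zero' (b m : ℕ) : dig b m 0 = m % b := by simp [dig]

lemma dig_succ (b m i : ℕ) : dig b m (i + 1) = dig b (m / b) i := by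
  simp [dig, pow_succ', Nat.div_div_eq_div_mul]

lemma le_of_dig_le (b : ℕ) (hb : 2 ≤ b) :
    ∀ m n : ℕ, (∀ i, dig b m i ≤ dig b n i) → m ≤ n := by
  intro m
  induction m using Nat.strong_induction_on with
  | _ m ih =>
    intro n h
    rcases Nat.eq_zero_or_pos m with rfl | hm
    · exact Nat.zero_le n
    · have hlt : m / b < m := Nat.div_lt_self hm (by omega)
      have h1 : m / b ≤ n / b := ih _ hlt _ (fun i => by
        have := h (i + 1); simpa [dig_succ] using this)
      have h0 : m % b ≤ n % b := by have := h 0; simpa [dig_zero'] using this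
      have hm' := Nat.div_add_mod m b
      have hn' := Nat.div_add_mod n b
      have : b * (m / b) ≤ b * (n / b) := Nat.mul_le_mul_left _ h1
      omega

lemma dig_add_mul_zero (b j m : ℕ) (hj : j < b) : dig b (j + b * m) 0 = j := by
  simp [dig_zero', Nat.add_mul_mod_self_left, Nat.mod_eq_of_lt hj]

lemma div_add_mul (b j m : ℕ) (hb : 0 < b) (hj : j < b) : (j + b * m) / b = m := by
  rw [Nat.add_mul_div_left _ _ hb, Nat.div_eq_of_lt hj, zero_add]

lemma dig_add_mul_succ (b j m i : ℕ) (hb : 0 < b) (hj : j < b) :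
    dig b (j + b * m) (i + 1) = dig b m i := by
  rw [dig_succ, div_add_mul b j m hb hj]

lemma sum_digitDom (b : ℕ) (hb : 2 ≤ b) (n : ℕ) (f : ℕ → ℚ) :
    ∑ m ∈ (Finset.range (n + 1)).filter (fun m => ∀ i, dig b m i ≤ dig b n i), f m
      = ∑ j ∈ Finset.range (n % b + 1),
          ∑ m' ∈ (Finset.range (n / b + 1)).filter
            (fun m' => ∀ i, dig b m' i ≤ dig b (n / b) i), f (j + b * m') := by
  have hb0 : 0 < b := by omega
  rw [← Finset.sum_product']
  symm
  apply Finset.sum_nbij' (i := fun p => p.1 + b * p.2) (j := fun m => (m % b, m / b))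
  · rintro ⟨j, m'⟩ hmem
    simp only [Finset.mem_product, Finset.mem_filter, Finset.mem_range] at hmem
    obtain ⟨hj, hm'le, hm'dom⟩ := hmem
    have hjb : j < b := lt_of_lt_of_le hj (by
      have := Nat.mod_lt n hb0; omega)
    have hdom : ∀ i, dig b (j + b * m') i ≤ dig b n i := by
      intro i
      cases i with
      | zero => rw [dig_add_mul_zero b j m' hjb, dig_zero']; omega
      | succ i =>
          rw [dig_add_mul_succ b j m' i hb0 hjb, dig_succ]
          exact hm'dom i
    have hle : j + b * m' ≤ n := le_of_dig_le b hb _ _ hdom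
    simp only [Finset.mem_filter, Finset.mem_range]
    exact ⟨by omega, hdom⟩
  · intro m hmem
    simp only [Finset.mem_filter, Finset.mem_range] at hmem
    obtain ⟨hle, hdom⟩ := hmem
    simp only [Finset.mem_product, Finset.mem_filter, Finset.mem_range]
    refine ⟨?_, ?_, ?_⟩
    · have := hdom 0; rw [dig_zero', dig_zero'] at this; omega
    · have : m / b ≤ n / b := Nat.div_le_div_right (by omega)
      omega
    · intro i
      have := hdom (i + 1)
      rw [dig_succ, dig_succ] at this
      exact this
  · rintro ⟨j, m'⟩ hmem
    simp only [Finset.mem_product, Finset.mem_filter, Finset.mem_range] at hmem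
    obtain ⟨hj, _, _⟩ := hmem
    have hjb : j < b := lt_of_lt_of_le hj (by have := Nat.mod_lt n hb0; omega)
    simp [Nat.add_mul_mod_self_left, Nat.mod_eq_of_lt hjb, div_add_mul b j m' hb0 hjb]
  · intro m hmem
    simp [Nat.mod_add_div]
  · rintro ⟨j, m'⟩ hmem
    rfl

/-- **Three-parameter digital binomial theorem.** -/
theorem three_parameter_digital_binomial_theorem (b : ℕ) (hb : 2 ≤ b)
    (N n : ℕ) (hn : n < b ^ N) (x y p q r : ℚ) :
    (∏ i ∈ Finset.range N, genBinom (p ^ i * x + q ^ i * y) r (dig b n i)) =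
      ∑ m ∈ (Finset.range (n + 1)).filter (fun m => ∀ i, dig b m i ≤ dig b n i),
        (∏ i ∈ Finset.range N, genBinom (p ^ i * x) r (dig b m i)) *
          ∏ i ∈ Finset.range N, genBinom (q ^ i * y) r (dig b n i - dig b m i) := by
  have hb0 : 0 < b := by omega
  induction N generalizing n x y with
  | zero =>
    have hn0 : n = 0 := by simpa using hn
    subst hn0
    rw [Finset.filter_true_of_mem (by intro m hm; simp at hm; subst hm; intro i; exact le_rfl)]
    simp
  | succ N ih =>
    have hn' : n / b < b ^ N := by
      rw [Nat.div_lt_iff_lt_mul hb0]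
      calc n < b ^ (N + 1) := hn
        _ = b ^ N * b := by ring
    have hnb : n % b < b := Nat.mod_lt n hb0
    -- LHS
    rw [Finset.prod_range_succ']
    have hL1 : ∀ i ∈ Finset.range N,
        genBinom (p ^ (i + 1) * x + q ^ (i + 1) * y) r (dig b n (i + 1))
          = genBinom (p ^ i * (p * x) + q ^ i * (q * y)) r (dig b (n / b) i) := by
      intro i _
      rw [dig_succ]
      ring_nf
    rw [Finset.prod_congr rfl hL1, ih (n / b) hn' (p * x) (q * y)]
    have hL0 : genBinom (p ^ 0 * x + q ^ 0 * y) r (dig b n 0)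
        = genBinom (x + y) r (n % b) := by
      rw [dig_zero']; ring_nf
    rw [hL0, genBinom_vandermonde x y r (n % b)]
    -- RHS
    rw [sum_digitDom b hb n, Finset.sum_mul_sum, Finset.sum_comm]
    apply Finset.sum_congr rfl
    intro j hj
    apply Finset.sum_congr rfl
    intro m' hm'
    simp only [Finset.mem_filter, Finset.mem_range] at hj hm'
    have hjb : j < b := by omega
    have key1 : (∏ i ∈ Finset.range (N + 1), genBinom (p ^ i * x) r
        (dig b (j + b * m') i))
          = (∏ i ∈ Finset.range N, genBinom (p ^ i * (p * x)) r (dig b m' i))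
            * genBinom x r j := by
      rw [Finset.prod_range_succ']
      congr 1
      · apply Finset.prod_congr rfl
        intro i _
        rw [dig_add_mul_succ b j m' i hb0 hjb]
        ring_nf
      · rw [dig_add_mul_zero b j m' hjb]
        ring_nf
    have key2 : (∏ i ∈ Finset.range (N + 1), genBinom (q ^ i * y) r
        (dig b n i - dig b (j + b * m') i))
          = (∏ i ∈ Finset.range N,
              genBinom (q ^ i * (q * y)) r (dig b (n / b) i - dig b m' i))
            * genBinom y r (n % b - j) := by
      rw [Finset.prod_range_succ']
      congr 1
      · apply Finset.prod_congr rfl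
        intro i _
        rw [dig_add_mul_succ b j m' i hb0 hjb, dig_succ]
        ring_nf
      · rw [dig_add_mul_zero b j m' hjb, dig_zero']
        ring_nf
    rw [key1, key2]
    ring
end

section
/- Let N be a positive integer and n = 2^N - 1. Then for all x, y, p, q in ℚ (or any commutative ring), (p^{N-1}x + y)(p^{N-2}x + qy)⋯(x + q^{N-1}y) = ∑_{m=0}^{n} p^{w_n(m)} q^{z_n(m)} x^{s(m)} y^{s(n-m)}, where w_n(m) = ∑_{k=0}^{N-1} (N-k-1)·δ(n_k, m_k). -/
/-- `w_n(m) = ∑_{k=0}^{N-1} (N-k-1)·δ(n_k, m_k)`, a reverse-weighted count of the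
positions among the `N` lowest binary digits at which `m` and `n` agree. -/
def wfun (N n m : ℕ) : ℕ :=
  ∑ k ∈ Finset.range N, (N - k - 1) * (if dig 2 n k = dig 2 m k then 1 else 0)

lemma dig_lt (m k : ℕ) : dig 2 m k < 2 := Nat.mod_lt _ (by norm_num)

lemma dig_n (N k : ℕ) (hk : k < N) : dig 2 (2 ^ N - 1) k = 1 := by
  unfold dig
  have h2 : 1 ≤ 2 ^ k := Nat.one_le_two_pow
  have h3 : (1:ℕ) ≤ 2 ^ (N - k) := Nat.one_le_two_pow
  have h : 2 ^ N - 1 = (2 ^ k - 1) + 2 ^ k * (2 ^ (N - k) - 1) := by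
    have h1 : 2 ^ N = 2 ^ k * 2 ^ (N - k) := by rw [← pow_add]; congr 1; omega
    have h5 : 2 ^ k * 2 ^ (N - k) = 2 ^ k * (2 ^ (N - k) - 1) + 2 ^ k := by
      have h6 : 2 ^ (N - k) = (2 ^ (N - k) - 1) + 1 := by omega
      calc 2 ^ k * 2 ^ (N - k) = 2 ^ k * ((2 ^ (N - k) - 1) + 1) := by rw [← h6]
        _ = 2 ^ k * (2 ^ (N - k) - 1) + 2 ^ k := by ring
    omega
  rw [h, Nat.add_mul_div_left _ _ (Nat.pos_of_ne_zero (by positivity)),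
    Nat.div_eq_of_lt (by omega), zero_add]
  have h4 : 2 ^ (N - k) = 2 * 2 ^ (N - k - 1) := by rw [← pow_succ']; congr 1; omega
  have h5 : (1:ℕ) ≤ 2 ^ (N - k - 1) := Nat.one_le_two_pow
  omega

lemma dig_low (N m k : ℕ) (hk : k < N) : dig 2 (m + 2 ^ N) k = dig 2 m k := by
  unfold dig
  have h1 : 2 ^ N = 2 ^ k * 2 ^ (N - k) := by rw [← pow_add]; congr 1; omega
  rw [h1, Nat.add_mul_div_left _ _ (Nat.pos_of_ne_zero (by positivity))]
  have h4 : 2 ^ (N - k) = 2 * 2 ^ (N - k - 1) := by rw [← pow_succ']; congr 1; omega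
  omega

lemma dig_top (N m : ℕ) (hm : m < 2 ^ N) : dig 2 m N = 0 := by
  unfold dig; rw [Nat.div_eq_of_lt hm]

lemma dig_top' (N m : ℕ) (hm : m < 2 ^ N) : dig 2 (m + 2 ^ N) N = 1 := by
  unfold dig
  rw [Nat.add_div_right _ (Nat.pos_of_ne_zero (by positivity)), Nat.div_eq_of_lt hm]

lemma sdig_eq (N : ℕ) : ∀ m, m < 2 ^ N → sdig m = ∑ k ∈ Finset.range N, dig 2 m k := by
  induction N with
  | zero => intro m hm; interval_cases m; simp [sdig]
  | succ N ih =>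
    intro m hm
    rcases Nat.eq_zero_or_pos m with rfl | hpos
    · simp [sdig]
      refine (Finset.sum_eq_zero ?_).symm
      intro k _; simp [dig]
    · have hd : sdig m = m % 2 + sdig (m / 2) := by
        unfold sdig
        rw [Nat.digits_def' (by norm_num : 1 < 2) hpos]
        simp
      have hdiv : m / 2 < 2 ^ N := by
        have : m < 2 * 2 ^ N := by rw [← pow_succ']; exact hm
        omega
      rw [hd, ih _ hdiv, Finset.sum_range_succ']
      have h0 : dig 2 m 0 = m % 2 := by unfold dig; simp
      have hs : ∀ k, dig 2 m (k + 1) = dig 2 (m / 2) k := by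
        intro k; unfold dig
        rw [pow_succ', Nat.div_div_eq_div_mul, mul_comm, ← Nat.div_div_eq_div_mul]
      simp [h0, hs, add_comm]

lemma sdig_add_pow (N m : ℕ) (hm : m < 2 ^ N) : sdig (m + 2 ^ N) = sdig m + 1 := by
  have h1 : m + 2 ^ N < 2 ^ (N + 1) := by rw [pow_succ]; omega
  rw [sdig_eq (N + 1) _ h1, sdig_eq N m hm, Finset.sum_range_succ,
    dig_top' N m hm]
  congr 1
  exact Finset.sum_congr rfl fun k hk => dig_low N m k (Finset.mem_range.mp hk)

lemma aux (N : ℕ) (y p q : ℚ) : ∀ x : ℚ,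
    (∏ i ∈ Finset.range N, (p ^ (N - 1 - i) * x + q ^ i * y)) =
      ∑ m ∈ Finset.range (2 ^ N),
        p ^ wfun N (2 ^ N - 1) m * q ^ zfun N (2 ^ N - 1) m * x ^ sdig m *
          y ^ sdig ((2 ^ N - 1) - m) := by
  induction N with
  | zero => intro x; simp [wfun, zfun, sdig]
  | succ N ih =>
    intro x
    have h2N : (0:ℕ) < 2 ^ N := Nat.pos_of_ne_zero (by positivity)
    -- left side
    have hL : (∏ i ∈ Finset.range (N + 1), (p ^ (N + 1 - 1 - i) * x + q ^ i * y)) =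
        (∏ i ∈ Finset.range N, (p ^ (N - 1 - i) * (p * x) + q ^ i * y)) * (x + q ^ N * y) := by
      rw [Finset.prod_range_succ]
      congr 1
      · refine Finset.prod_congr rfl fun i hi => ?_
        have hi' := Finset.mem_range.mp hi
        have : N + 1 - 1 - i = (N - 1 - i) + 1 := by omega
        rw [this, pow_succ]
        ring
      · simp
    rw [hL, ih (p * x)]
    -- right side: split the sum
    have hsplit : (2:ℕ) ^ (N + 1) = 2 ^ N + 2 ^ N := by rw [pow_succ]; omega
    rw [hsplit, Finset.sum_range_add]
    -- notation
    set n := 2 ^ N - 1 with hn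
    have hn1 : 2 ^ N = n + 1 := by omega
    have hn' : 2 ^ N + 2 ^ N - 1 = n + 2 ^ N := by omega
    -- per-term facts for m < 2^N
    have key : ∀ m, m < 2 ^ N →
        (wfun (N + 1) (2 ^ N + 2 ^ N - 1) m = wfun N n m + sdig m ∧
         zfun (N + 1) (2 ^ N + 2 ^ N - 1) m = zfun N n m + N ∧
         wfun (N + 1) (2 ^ N + 2 ^ N - 1) (2 ^ N + m) = wfun N n m + sdig m ∧
         zfun (N + 1) (2 ^ N + 2 ^ N - 1) (2 ^ N + m) = zfun N n m) := by
      intro m hm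
      have hdn : ∀ k, k < N + 1 → dig 2 (2 ^ N + 2 ^ N - 1) k = 1 := by
        intro k hk
        have : 2 ^ N + 2 ^ N - 1 = 2 ^ (N + 1) - 1 := by rw [pow_succ]; omega
        rw [this]; exact dig_n (N + 1) k hk
      have hdm : ∀ k, k < N → dig 2 (2 ^ N + m) k = dig 2 m k := by
        intro k hk; rw [add_comm]; exact dig_low N m k hk
      have hcnt : ∀ m', (∀ k, k < N → dig 2 m' k = dig 2 m k) →
          (∑ k ∈ Finset.range N, (if dig 2 (2 ^ N + 2 ^ N - 1) k = dig 2 m' k then 1 else 0))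
            = sdig m := by
        intro m' hm'
        rw [sdig_eq N m hm]
        refine Finset.sum_congr rfl fun k hk => ?_
        have hk' := Finset.mem_range.mp hk
        rw [hdn k (by omega), hm' k hk']
        have := dig_lt m k
        interval_cases h : dig 2 m k <;> simp
      constructor
      · unfold wfun
        rw [Finset.sum_range_succ, hdn N (by omega), dig_top N m hm]
        have e : N + 1 - N - 1 = 0 := by omega
        rw [e, zero_mul, add_zero, ← hcnt m (fun k _ => rfl), ← Finset.sum_add_distrib]
        refine Finset.sum_congr rfl fun k hk => ?_
        have hk' := Finset.mem_range.mp hk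
        have : N + 1 - k - 1 = (N - k - 1) + 1 := by omega
        rw [this, hdn k (by omega), dig_n N k hk']; ring
      refine ⟨?_, ?_, ?_⟩
      · unfold zfun
        rw [Finset.sum_range_succ, hdn N (by omega), dig_top N m hm,
          if_neg (by norm_num)]
        norm_num
        refine Finset.sum_congr rfl fun k hk => ?_
        have hk' := Finset.mem_range.mp hk
        rw [hdn k (by omega), dig_n N k hk']
      · unfold wfun
        rw [add_comm (2 ^ N) m, Finset.sum_range_succ, hdn N (by omega), dig_top' N m hm]
        have e : N + 1 - N - 1 = 0 := by omega
        rw [e, zero_mul, add_zero, ← hcnt (m + 2 ^ N) (fun k hk => dig_low N m k hk),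
          ← Finset.sum_add_distrib]
        refine Finset.sum_congr rfl fun k hk => ?_
        have hk' := Finset.mem_range.mp hk
        rw [dig_low N m k hk']
        have : N + 1 - k - 1 = (N - k - 1) + 1 := by omega
        rw [this, hdn k (by omega), dig_n N k hk']; ring
      · unfold zfun
        rw [add_comm (2 ^ N) m, Finset.sum_range_succ, hdn N (by omega), dig_top' N m hm,
          if_pos rfl]
        norm_num
        refine Finset.sum_congr rfl fun k hk => ?_
        have hk' := Finset.mem_range.mp hk
        rw [hdn k (by omega), dig_low N m k hk', dig_n N k hk']
    -- rewrite both halves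
    have h1 : ∀ m ∈ Finset.range (2 ^ N),
        p ^ wfun (N + 1) (2 ^ N + 2 ^ N - 1) m * q ^ zfun (N + 1) (2 ^ N + 2 ^ N - 1) m *
            x ^ sdig m * y ^ sdig (2 ^ N + 2 ^ N - 1 - m) =
          (p ^ wfun N n m * q ^ zfun N n m * (p * x) ^ sdig m * y ^ sdig (n - m)) *
            (q ^ N * y) := by
      intro m hm
      have hm' := Finset.mem_range.mp hm
      obtain ⟨hw, hz, _, _⟩ := key m hm'
      have hnm : n - m < 2 ^ N := by omega
      have hy : 2 ^ N + 2 ^ N - 1 - m = (n - m) + 2 ^ N := by omega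
      rw [hw, hz, hy, sdig_add_pow N (n - m) hnm]
      rw [pow_add, pow_add, pow_succ, mul_pow]
      ring
    have h2 : ∀ m ∈ Finset.range (2 ^ N),
        p ^ wfun (N + 1) (2 ^ N + 2 ^ N - 1) (2 ^ N + m) *
            q ^ zfun (N + 1) (2 ^ N + 2 ^ N - 1) (2 ^ N + m) *
            x ^ sdig (2 ^ N + m) * y ^ sdig (2 ^ N + 2 ^ N - 1 - (2 ^ N + m)) =
          (p ^ wfun N n m * q ^ zfun N n m * (p * x) ^ sdig m * y ^ sdig (n - m)) * x := by
      intro m hm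
      have hm' := Finset.mem_range.mp hm
      obtain ⟨_, _, hw, hz⟩ := key m hm'
      have hy : 2 ^ N + 2 ^ N - 1 - (2 ^ N + m) = n - m := by omega
      rw [hw, hz, hy, add_comm (2 ^ N) m, sdig_add_pow N m hm']
      rw [pow_add, pow_succ, mul_pow]
      ring
    rw [Finset.sum_congr rfl h1, Finset.sum_congr rfl h2, ← Finset.sum_mul, ← Finset.sum_mul]
    ring

/-- **A p,q-analog of the digital binomial theorem:** for `n = 2^N - 1`,
`(p^{N-1}x + y)(p^{N-2}x + qy)⋯(x + q^{N-1}y)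
  = ∑_{m=0}^{n} p^{w_n(m)} q^{z_n(m)} x^{s(m)} y^{s(n-m)}`. -/
theorem pq_digital_binomial_theorem (N : ℕ) (hN : 0 < N) (n : ℕ) (hn : n = 2 ^ N - 1)
    (x y p q : ℚ) :
    (∏ i ∈ Finset.range N, (p ^ (N - 1 - i) * x + q ^ i * y)) =
      ∑ m ∈ Finset.range (n + 1),
        p ^ wfun N n m * q ^ zfun N n m * x ^ sdig m * y ^ sdig (n - m) := by
  have h2N : (0:ℕ) < 2 ^ N := Nat.pos_of_ne_zero (by positivity)
  subst hn
  have h : 2 ^ N - 1 + 1 = 2 ^ N := by omega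
  rw [h]
  exact aux N y p q x
end
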